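/- Let n ≥ 3 be an integer and let b, d be integers with gcd(b,d,n) = 1, so that [b:d] is a vertex of the Farey graph G3(n); set r = gcd(d,n). Then the number of walks of length 2 in G3(n) between the vertex [1:0] and the vertex [b:d] equals: 2 if r = 1; 4 if r = 2 and b is odd; 0 if r ≥ 2 and r divides neither b−1 nor b+1; and r if r > 2 and r divides one of b−1, b+1. -/

import Mathlib

/-- The equivalence relation identifying `(a,c)` with `(-a,-c)` on the set of pairs of
elements of `ℤ/nℤ` generating the unit ideal. -/
def FareySetoid (n : ℕ) : Setoid {p : ZMod n × ZMod n // IsCoprime p.1 p.2} where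
  r p q := p.1 = q.1 ∨ p.1 = -q.1
  iseqv := by
    constructor
    · intro p; exact Or.inl rfl
    · rintro p q (h | h)
      · exact Or.inl h.symm
      · right; rw [h, neg_neg]
    · rintro p q s (h1 | h1) (h2 | h2)
      · exact Or.inl (h1.trans h2)
      · right; rw [h1, h2]
      · right; rw [h1, h2]
      · left; rw [h1, h2, neg_neg]

/-- The vertices of the Farey graph `G3(n)`: classes `[a:c]` of pairs `(a,c) ∈ (ℤ/nℤ)²`
generating the unit ideal, with `(a,c) ~ (-a,-c)`. -/
def FareyVertex (n : ℕ) := Quotient (FareySetoid n)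

/-- The vertex `[a:c]` of the Farey graph. -/
def FareyVertex.mk (n : ℕ) (a c : ZMod n) (h : IsCoprime a c) : FareyVertex n :=
  Quotient.mk (FareySetoid n) ⟨(a, c), h⟩

/-- The Farey graph `G3(n)`: vertices `[a:c]` and `[b:d]` are adjacent iff
`ad - bc ≡ ±1 (mod n)`. -/
def FareyGraph (n : ℕ) : SimpleGraph (FareyVertex n) where
  Adj u v := u ≠ v ∧ ∃ a c b d : ZMod n,
    (∃ h, u = FareyVertex.mk n a c h) ∧ (∃ h, v = FareyVertex.mk n b d h) ∧
    (a * d - b * c = 1 ∨ a * d - b * c = -1)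
  symm := by
    constructor
    rintro u v ⟨hne, a, c, b, d, hu, hv, h⟩
    refine ⟨hne.symm, b, d, a, c, hv, hu, ?_⟩
    rcases h with h | h
    · right; linear_combination -h
    · left; linear_combination -h
  loopless := ⟨fun u h => h.1 rfl⟩

instance (n : ℕ) [NeZero n] : Finite (FareyVertex n) := Quotient.finite _

/-- A pair of integers `b, d` with `gcd(b, d, n) = 1` yields a pair generating the unit
ideal of `ℤ/nℤ`. -/
lemma isCoprime_zmod_of_gcd {n : ℕ} {b d : ℤ} (h : Int.gcd b (Int.gcd d n) = 1) :
    IsCoprime (b : ZMod n) (d : ZMod n) := by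
  obtain ⟨u, v, huv⟩ := Int.isCoprime_iff_gcd_eq_one.mpr h
  have hgcd : ((Int.gcd d n : ℕ) : ℤ) = d * Int.gcdA d n + n * Int.gcdB d n :=
    Int.gcd_eq_gcd_ab d (n : ℤ)
  refine ⟨(u : ZMod n), ((v * Int.gcdA d (n : ℤ) : ℤ) : ZMod n), ?_⟩
  have huv' : u * b + (v * Int.gcdA d (n : ℤ)) * d + (v * Int.gcdB d (n : ℤ)) * n = 1 := by
    rw [← huv, hgcd]; ring
  have := congrArg (fun z : ℤ => (z : ZMod n)) huv'
  push_cast at this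
  rw [ZMod.natCast_self] at this
  push_cast
  linear_combination this
/-- The vertex `[b:d]` of `G3(n)` determined by integers `b`, `d` with `gcd(b,d,n) = 1`. -/
def FareyVertex.ofInt (n : ℕ) (b d : ℤ) (h : Int.gcd b (Int.gcd d n) = 1) : FareyVertex n :=
  FareyVertex.mk n (b : ZMod n) (d : ZMod n) (isCoprime_zmod_of_gcd h)

/-- The number of vertices of the Farey graph `G3(n)`. -/
noncomputable def fareyCard (n : ℕ) : ℕ := Nat.card (FareyVertex n)

/-- The characteristic polynomial of the (real) adjacency matrix of the Farey
graph `G3(n)` (junk value `1` for `n = 0`). -/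
noncomputable def fareyCharpoly (n : ℕ) : Polynomial ℝ :=
  if h : n = 0 then 1
  else
    letI : NeZero n := ⟨h⟩
    letI : Fintype (FareyVertex n) := Fintype.ofFinite _
    letI : DecidableEq (FareyVertex n) := Classical.decEq _
    letI : DecidableRel (FareyGraph n).Adj := Classical.decRel _
    Matrix.charpoly ((FareyGraph n).adjMatrix ℝ)

/-- The spectrum of the Farey graph `G3(n)`: the multiset of real roots, with
multiplicity, of the characteristic polynomial of its adjacency matrix. -/
noncomputable def sp3 (n : ℕ) : Multiset ℝ := (fareyCharpoly n).roots

lemma farey_count_ker (n : ℕ) [NeZero n] (d : ℤ) :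
    Nat.card {x : ZMod n // x * (d : ZMod n) = 0} = Int.gcd d n := by
  set r : ℕ := Int.gcd d n with hr
  have hn0 : n ≠ 0 := NeZero.ne n
  have hr0 : r ≠ 0 := by simp [hr, Int.gcd_eq_zero_iff, hn0]
  haveI : NeZero r := ⟨hr0⟩
  have hrd : (r : ℤ) ∣ d := Int.gcd_dvd_left d n
  have hrn : r ∣ n := Int.natCast_dvd_natCast.mp (Int.gcd_dvd_right d n)
  set m : ℕ := n / r with hm
  have hmr : m * r = n := Nat.div_mul_cancel hrn
  have hm0 : m ≠ 0 := by rintro h; rw [h] at hmr; simp at hmr; omega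
  have key : ∀ k : ZMod r, ((k.val * m : ℕ) : ZMod n) * (d : ZMod n) = 0 := by
    intro k
    obtain ⟨e, he⟩ := hrd
    have h2 : ((((k.val * m : ℕ) : ℤ) * d : ℤ) : ZMod n) = 0 := by
      rw [ZMod.intCast_zmod_eq_zero_iff_dvd]
      refine ⟨k.val * e, ?_⟩
      push_cast
      rw [he, ← hmr]
      push_cast
      ring
    push_cast at h2 ⊢
    exact h2
  let f : ZMod r → {x : ZMod n // x * (d : ZMod n) = 0} :=
    fun k => ⟨((k.val * m : ℕ) : ZMod n), key k⟩
  have hinj : Function.Injective f := by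
    intro k₁ k₂ hk
    have h1 : ((k₁.val * m : ℕ) : ZMod n) = ((k₂.val * m : ℕ) : ZMod n) :=
      congrArg Subtype.val hk
    rw [ZMod.natCast_eq_natCast_iff] at h1
    have h2 : (n : ℤ) ∣ ((k₂.val : ℤ) * m - (k₁.val : ℤ) * m) := by
      have := h1.dvd
      push_cast at this
      exact this
    have h3 : ((m : ℤ) * r) ∣ (m : ℤ) * ((k₂.val : ℤ) - k₁.val) := by
      rw [show (m:ℤ) * ((k₂.val : ℤ) - k₁.val) = (k₂.val : ℤ) * m - (k₁.val : ℤ) * m by ring]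
      rw [show ((m:ℤ) * r) = (n : ℤ) by exact_mod_cast congrArg Nat.cast hmr]
      exact h2
    have h4 : (r : ℤ) ∣ ((k₂.val : ℤ) - k₁.val) :=
      (mul_dvd_mul_iff_left (by exact_mod_cast hm0 : (m:ℤ) ≠ 0)).mp h3
    have h5 : (k₂.val : ℤ) - k₁.val = 0 := by
      refine Int.eq_zero_of_abs_lt_dvd h4 ?_
      have := ZMod.val_lt k₁
      have := ZMod.val_lt k₂
      rw [abs_sub_lt_iff]
      constructor <;> [skip; skip] <;> push_cast <;> omega
    exact ZMod.val_injective r (by omega)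
  have hsurj : Function.Surjective f := by
    rintro ⟨x, hx⟩
    obtain ⟨e, he⟩ := hrd
    have hn' : (m : ℤ) * r = n := by exact_mod_cast congrArg Nat.cast hmr
    have hco : Int.gcd e m = 1 := by
      have h := Int.gcd_div_gcd_div_gcd (i := d) (j := (n:ℤ)) (by positivity)
      rw [← hr] at h
      have h1 : d / r = e := by rw [he]; exact Int.mul_ediv_cancel_left _ (by exact_mod_cast hr0)
      have h2 : (n : ℤ) / r = m := by
        rw [← hmr]; push_cast; exact Int.mul_ediv_cancel _ (by exact_mod_cast hr0)
      rwa [h1, h2] at h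
    have hx' : (n : ℤ) ∣ (x.val : ℤ) * d := by
      rw [← ZMod.intCast_zmod_eq_zero_iff_dvd]
      push_cast
      rw [ZMod.natCast_val, ZMod.cast_id]
      exact hx
    have hmx : (m : ℤ) ∣ (x.val : ℤ) := by
      have h6 : (m : ℤ) ∣ (x.val : ℤ) * e := by
        rcases hx' with ⟨t, ht⟩
        rw [he] at ht
        refine ⟨t, ?_⟩
        have h7 : ((x.val:ℤ) * e) * r = ((m:ℤ) * t) * r := by linear_combination ht - t * hn'
        exact mul_right_cancel₀ (by exact_mod_cast hr0 : (r:ℤ) ≠ 0) h7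
      exact (Int.isCoprime_iff_gcd_eq_one.mpr (by rwa [Int.gcd_comm] at hco)).dvd_of_dvd_mul_right h6
    obtain ⟨q, hq⟩ := hmx
    refine ⟨(q : ZMod r), ?_⟩
    apply Subtype.ext
    show ((((q : ZMod r)).val * m : ℕ) : ZMod n) = x
    have h8 : (r : ℤ) ∣ (((q : ZMod r)).val : ℤ) - q := by
      rw [← ZMod.intCast_zmod_eq_zero_iff_dvd]
      push_cast
      rw [ZMod.natCast_val, ZMod.cast_id, sub_self]
    have h9 : (n : ℤ) ∣ ((((q : ZMod r)).val * m : ℕ) : ℤ) - (x.val : ℤ) := by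
      rcases h8 with ⟨t, ht⟩
      refine ⟨t, ?_⟩
      push_cast
      linear_combination (m:ℤ) * ht - hq + t * hn'
    have h10 : ((((q : ZMod r)).val * m : ℕ) : ZMod n) = ((x.val : ℕ) : ZMod n) := by
      rw [ZMod.natCast_eq_natCast_iff, Nat.modEq_iff_dvd]
      rcases h9 with ⟨t, ht⟩
      exact ⟨-t, by push_cast at ht ⊢; linarith⟩
    rw [h10, ZMod.natCast_val, ZMod.cast_id]
  rw [Nat.card_congr (Equiv.ofBijective f ⟨hinj, hsurj⟩).symm, Nat.card_zmod]


lemma farey_count_fiber (n : ℕ) [NeZero n] (d c : ℤ) :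
    Nat.card {x : ZMod n // x * (d : ZMod n) = (c : ZMod n)} =
      if (Int.gcd d n : ℤ) ∣ c then Int.gcd d n else 0 := by
  set r : ℕ := Int.gcd d n with hr
  have hrd : (r : ℤ) ∣ d := Int.gcd_dvd_left d n
  have hrn : (r : ℤ) ∣ (n : ℤ) := Int.gcd_dvd_right d n
  by_cases hc : (r : ℤ) ∣ c
  · rw [if_pos hc]
    obtain ⟨c', hc'⟩ := hc
    have hab := Int.gcd_eq_gcd_ab d (n : ℤ)
    set x₀ : ZMod n := ((c' * Int.gcdA d n : ℤ) : ZMod n) with hx₀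
    have hsol : x₀ * (d : ZMod n) = (c : ZMod n) := by
      have h5 : (((c' * Int.gcdA d n * d : ℤ)) : ZMod n) = ((c : ℤ) : ZMod n) := by
        rw [ZMod.intCast_eq_intCast_iff, Int.modEq_iff_dvd, show c - c' * Int.gcdA d n * d = -(c' * Int.gcdA d n * d - c) by ring, dvd_neg]
        rw [Int.dvd_def]
        refine ⟨-(c' * Int.gcdB d n), ?_⟩
        have h6 : (r : ℤ) = d * Int.gcdA d n + n * Int.gcdB d n := by rw [hr]; exact hab
        linear_combination (-c') * h6 - hc'
      push_cast at h5
      rw [hx₀]; push_cast; linear_combination h5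
    have E : {x : ZMod n // x * (d : ZMod n) = (c : ZMod n)} ≃
        {x : ZMod n // x * (d : ZMod n) = 0} :=
      { toFun := fun p => ⟨p.1 - x₀, by rw [sub_mul, p.2, hsol, sub_self]⟩
        invFun := fun p => ⟨p.1 + x₀, by rw [add_mul, p.2, hsol, zero_add]⟩
        left_inv := fun p => by apply Subtype.ext; simp
        right_inv := fun p => by apply Subtype.ext; simp }
    rw [Nat.card_congr E, farey_count_ker]
  · rw [if_neg hc]
    have : IsEmpty {x : ZMod n // x * (d : ZMod n) = (c : ZMod n)} := by
      refine ⟨?_⟩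
      rintro ⟨x, hx⟩
      apply hc
      have h1 : (n : ℤ) ∣ (x.val : ℤ) * d - c := by
        rw [← ZMod.intCast_zmod_eq_zero_iff_dvd]
        push_cast
        rw [ZMod.natCast_val, ZMod.cast_id, hx, sub_self]
      have h2 : (r : ℤ) ∣ (x.val : ℤ) * d - c := dvd_trans hrn h1
      have h3 : (r : ℤ) ∣ (x.val : ℤ) * d := Dvd.dvd.mul_left hrd _
      have := dvd_sub h3 h2
      simpa using this
    exact Nat.card_of_isEmpty


section Helpers
variable {n : ℕ}

lemma fareyMk_eq_iff (a c x y : ZMod n) (h : IsCoprime a c) (h' : IsCoprime x y) :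
    FareyVertex.mk n a c h = FareyVertex.mk n x y h' ↔ ((a, c) = (x, y) ∨ (a, c) = (-x, -y)) := by
  constructor
  · intro he
    have h2 := Quotient.exact he
    change (a, c) = (x, y) ∨ (a, c) = -(x, y) at h2
    simpa using h2
  · intro he
    apply Quotient.sound
    change (a, c) = (x, y) ∨ (a, c) = -(x, y)
    simpa using he

end Helpers

section Helpers2
variable {n : ℕ} (hn : 3 ≤ n)
include hn

lemma farey_two_ne_zero : (2 : ZMod n) ≠ 0 := by
  have h2 : ((2 : ℕ) : ZMod n) ≠ 0 := by
    rw [Ne, ZMod.natCast_eq_zero_iff]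
    intro hd
    have := Nat.le_of_dvd (by norm_num) hd
    omega
  simpa using h2

lemma farey_one_ne_zero : (1 : ZMod n) ≠ 0 := by
  haveI : Fact (1 < n) := ⟨by omega⟩
  exact one_ne_zero

lemma farey_one_ne_neg_one : (1 : ZMod n) ≠ -1 := by
  intro h
  exact farey_two_ne_zero hn (by linear_combination h)

lemma farey_neg_one_ne_zero : (-1 : ZMod n) ≠ 0 :=
  neg_ne_zero.mpr (farey_one_ne_zero hn)

lemma adj_base_iff (w : FareyVertex n) :
    (FareyGraph n).Adj (FareyVertex.mk n 1 0 (isCoprime_one_left)) w ↔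
      ∃ x : ZMod n, w = FareyVertex.mk n x 1 (isCoprime_one_right) := by
  constructor
  · rintro ⟨hne, a, c, b', d', ⟨ha, h1⟩, ⟨hb, h2⟩, hdet⟩
    rw [fareyMk_eq_iff] at h1
    simp only [Prod.mk.injEq, neg_zero] at h1
    have hc : c = 0 := by
      rcases h1 with ⟨_, hc⟩ | ⟨_, hc⟩
      · exact hc.symm
      · linear_combination hc
    subst hc
    have hd' : d' = 1 ∨ d' = -1 := by
      rcases h1 with ⟨ha1, _⟩ | ⟨ha1, _⟩ <;> rcases hdet with h | h
      · left; linear_combination h + d' * ha1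
      · right; linear_combination h + d' * ha1
      · right; linear_combination -h + d' * ha1
      · left; linear_combination -h + d' * ha1
    rcases hd' with rfl | rfl
    · exact ⟨b', h2⟩
    · refine ⟨-b', ?_⟩
      rw [h2, fareyMk_eq_iff]
      right
      simp
  · rintro ⟨x, rfl⟩
    refine ⟨?_, 1, 0, x, 1, ⟨_, rfl⟩, ⟨_, rfl⟩, Or.inl (by ring_nf)⟩
    rw [Ne, fareyMk_eq_iff]
    simp only [Prod.mk.injEq, not_or, not_and]
    constructor
    · intro _ h; exact farey_one_ne_zero hn h.symm
    · intro _ h; exact farey_neg_one_ne_zero hn h.symm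

lemma adj_target_iff (x B D : ZMod n) (hBD : IsCoprime B D) :
    (FareyGraph n).Adj (FareyVertex.mk n x 1 isCoprime_one_right) (FareyVertex.mk n B D hBD) ↔
      (x * D - B = 1 ∨ x * D - B = -1) := by
  constructor
  · rintro ⟨hne, a, c, b', d', ⟨ha, h1⟩, ⟨hb, h2⟩, hdet⟩
    rw [fareyMk_eq_iff] at h1 h2
    simp only [Prod.mk.injEq] at h1 h2
    obtain ⟨ha1, hc1⟩ | ⟨ha1, hc1⟩ := h1 <;> obtain ⟨hb1, hd1⟩ | ⟨hb1, hd1⟩ := h2 <;>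
        rcases hdet with h | h
    · exact Or.inl (by linear_combination h + d' * ha1 + x * hd1 - hb1 - b' * hc1)
    · exact Or.inr (by linear_combination h + d' * ha1 + x * hd1 - hb1 - b' * hc1)
    · exact Or.inr (by linear_combination -h + x * hd1 - d' * ha1 - hb1 + b' * hc1)
    · exact Or.inl (by linear_combination -h + x * hd1 - d' * ha1 - hb1 + b' * hc1)
    · exact Or.inr (by linear_combination -h + x * hd1 + d' * ha1 - hb1 - b' * hc1)
    · exact Or.inl (by linear_combination -h + x * hd1 + d' * ha1 - hb1 - b' * hc1)
    · exact Or.inl (by linear_combination h + x * hd1 - d' * ha1 - hb1 + b' * hc1)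
    · exact Or.inr (by linear_combination h + x * hd1 - d' * ha1 - hb1 + b' * hc1)
  · intro hdet
    refine ⟨?_, x, 1, B, D, ⟨_, rfl⟩, ⟨_, rfl⟩, by simpa using hdet⟩
    rw [Ne, fareyMk_eq_iff]
    simp only [Prod.mk.injEq, not_or, not_and]
    refine ⟨fun hxB h1D => ?_, fun hxB h1D => ?_⟩
    · rcases hdet with h | h
      · exact farey_one_ne_zero hn (by linear_combination -h - x * h1D + hxB)
      · exact farey_neg_one_ne_zero hn (by linear_combination -h - x * h1D + hxB)
    · rcases hdet with h | h
      · exact farey_one_ne_zero hn (by linear_combination -h + x * h1D - hxB)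
      · exact farey_neg_one_ne_zero hn (by linear_combination -h + x * h1D - hxB)

end Helpers2


/-- For `n ≥ 3` and integers `b, d` with `gcd(b,d,n) = 1`, setting
`r = gcd(d,n)`, the number of walks of length 2 in `G3(n)` between `[1:0]` and `[b:d]`
(equivalently, the number of common neighbours of these vertices) is: `2` if `r = 1`;
`4` if `r = 2` and `b` is odd; `0` if `r ≥ 2` and `r` divides neither `b-1` nor `b+1`;
and `r` if `r > 2` and `r` divides one of `b-1`, `b+1`. -/
theorem stmt6 (n : ℕ) (hn : 3 ≤ n) (b d : ℤ) (h : Int.gcd b (Int.gcd d n) = 1) :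
    let r : ℕ := Int.gcd d n
    let v₀ : FareyVertex n := FareyVertex.ofInt n 1 0 (by simp)
    let v : FareyVertex n := FareyVertex.ofInt n b d h
    let W : ℕ := Nat.card {w : FareyVertex n // (FareyGraph n).Adj v₀ w ∧ (FareyGraph n).Adj w v}
    (r = 1 → W = 2) ∧
    (r = 2 → Odd b → W = 4) ∧
    (2 ≤ r → ¬ ((r : ℤ) ∣ b - 1) → ¬ ((r : ℤ) ∣ b + 1) → W = 0) ∧
    (2 < r → ((r : ℤ) ∣ b - 1 ∨ (r : ℤ) ∣ b + 1) → W = r) := by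
  intro r v₀ v W
  haveI : NeZero n := ⟨by omega⟩
  set B : ZMod n := ((b : ℤ) : ZMod n) with hB
  set D : ZMod n := ((d : ℤ) : ZMod n) with hD
  have hv₀ : v₀ = FareyVertex.mk n 1 0 isCoprime_one_left := by
    show FareyVertex.mk n ((1:ℤ) : ZMod n) ((0:ℤ) : ZMod n) _ = _
    rw [fareyMk_eq_iff]
    left
    norm_num
  have hv : v = FareyVertex.mk n B D (isCoprime_zmod_of_gcd h) := rfl
  -- the common-neighbour count as a count of x : ZMod n
  have hWP : W = Nat.card {x : ZMod n // x * D - B = 1 ∨ x * D - B = -1} := by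
    refine Nat.card_congr (Equiv.ofBijective ?_ ⟨?_, ?_⟩).symm
    · exact fun x => ⟨FareyVertex.mk n x.1 1 isCoprime_one_right,
        by rw [hv₀]; exact (adj_base_iff hn _).mpr ⟨x.1, rfl⟩,
        by rw [hv]; exact (adj_target_iff hn x.1 B D _).mpr x.2⟩
    · rintro ⟨x, hx⟩ ⟨y, hy⟩ hxy
      have h1 : FareyVertex.mk n x 1 isCoprime_one_right
          = FareyVertex.mk n y 1 isCoprime_one_right := congrArg Subtype.val hxy
      rw [fareyMk_eq_iff] at h1
      simp only [Prod.mk.injEq] at h1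
      rcases h1 with ⟨h1, _⟩ | ⟨_, h1⟩
      · exact Subtype.ext h1
      · exact absurd h1 (farey_one_ne_neg_one hn)
    · rintro ⟨w, h1, h2⟩
      rw [hv₀] at h1
      obtain ⟨x, rfl⟩ := (adj_base_iff hn w).mp h1
      rw [hv] at h2
      exact ⟨⟨x, (adj_target_iff hn x B D _).mp h2⟩, rfl⟩
  -- rewrite the predicate as two fibers
  have hC1 : ∀ x : ZMod n, (x * D - B = 1 ↔ x * D = ((b + 1 : ℤ) : ZMod n)) := by
    intro x; rw [hB]; push_cast; constructor <;> intro hh <;> linear_combination hh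
  have hC2 : ∀ x : ZMod n, (x * D - B = -1 ↔ x * D = ((b - 1 : ℤ) : ZMod n)) := by
    intro x; rw [hB]; push_cast; constructor <;> intro hh <;> linear_combination hh
  have hWP2 : W = Nat.card {x : ZMod n // x * D = ((b + 1 : ℤ) : ZMod n)}
      + Nat.card {x : ZMod n // x * D = ((b - 1 : ℤ) : ZMod n)} := by
    rw [hWP, Nat.card_congr (Equiv.subtypeEquivRight (q := fun x : ZMod n =>
      x * D = ((b + 1 : ℤ) : ZMod n) ∨ x * D = ((b - 1 : ℤ) : ZMod n))
      (fun x => by rw [hC1 x, hC2 x]))]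
    rw [Nat.card_congr (subtypeOrEquiv _ _ ?_), Nat.card_sum]
    rw [Pi.disjoint_iff]
    intro x
    rw [Prop.disjoint_iff]
    rintro ⟨hp, hq⟩
    rw [hp] at hq
    apply farey_two_ne_zero hn
    have : ((b + 1 : ℤ) : ZMod n) - ((b - 1 : ℤ) : ZMod n) = 2 := by push_cast; ring
    rw [hq] at this
    simpa using this.symm
  rw [farey_count_fiber n d (b+1), farey_count_fiber n d (b-1)] at hWP2
  have hr0 : r ≠ 0 := by
    simp only [r, Ne, Int.gcd_eq_zero_iff]
    rintro ⟨-, hn0⟩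
    simp at hn0
    omega
  refine ⟨?_, ?_, ?_, ?_⟩
  · intro hr1
    rw [hWP2]
    simp only [show (Int.gcd d n : ℤ) = 1 by exact_mod_cast hr1, one_dvd, if_true]
    have e1 : Int.gcd d n = 1 := hr1
    omega
  · intro hr2 hodd
    obtain ⟨k, rfl⟩ := hodd
    rw [hWP2]
    have e2 : (Int.gcd d n : ℤ) = 2 := by exact_mod_cast hr2
    rw [e2, if_pos ⟨k + 1, by ring⟩, if_pos ⟨k, by ring⟩]
    have e3 : Int.gcd d n = 2 := hr2
    omega
  · intro _ hnd1 hnd2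
    rw [hWP2, if_neg (by exact_mod_cast hnd2), if_neg (by exact_mod_cast hnd1)]
  · intro hr2 hd12
    have hnotboth : ¬ (((r:ℤ) ∣ b - 1) ∧ ((r:ℤ) ∣ b + 1)) := by
      rintro ⟨u1, u2⟩
      have : (r : ℤ) ∣ 2 := by
        have := dvd_sub u2 u1
        simpa using this
      have := Int.le_of_dvd (by norm_num) this
      omega
    rcases hd12 with hd1 | hd1
    · rw [hWP2, if_neg (fun hh => hnotboth ⟨hd1, hh⟩), if_pos hd1]
      simp
      rfl
    · rw [hWP2, if_pos hd1, if_neg (fun hh => hnotboth ⟨hh, hd1⟩)]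
      simp
      rfl
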